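/- Let K be a field of characteristic not 2 and let Q₁, Q₂ be quaternion algebras over K, each equipped with its canonical involution. The tensor product algebra with involution (Q₁, can) ⊗ (Q₂, can) is hyperbolic (i.e., contains an element e with e² = e whose image under the tensor involution is 1 − e) if and only if Q₁ or Q₂ is split (isomorphic to 2×2 matrices over K). -/

import Mathlib

open Quaternion TensorProduct

variable (K : Type) [Field K]

/-- The canonical involution of a quaternion algebra, as a `K`-linear map. -/
def quatStarLin (a b : K) : ℍ[K,a,b] →ₗ[K] ℍ[K,a,b] where
  toFun x := star x
  map_add' x y := star_add x y
  map_smul' r x := by simp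

/-- The tensor product of the canonical involutions on `Q₁ ⊗[K] Q₂`. -/
noncomputable def tensorCanInvolution (a b c d : K) :
    ℍ[K,a,b] ⊗[K] ℍ[K,c,d] →ₗ[K] ℍ[K,a,b] ⊗[K] ℍ[K,c,d] :=
  TensorProduct.map (quatStarLin K a b) (quatStarLin K c d)

/-- A quaternion algebra is split if it is isomorphic to the 2×2 matrix algebra. -/
def QuatIsSplit (a b : K) : Prop :=
  Nonempty (ℍ[K,a,b] ≃ₐ[K] Matrix (Fin 2) (Fin 2) K)

namespace QuatHyp

variable {K}

section Quat
variable {a b : K}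

lemma smul_one_eq_zero {s : K} (h : s • (1:ℍ[K,a,b]) = 0) : s = 0 := by
  have := congrArg QuaternionAlgebra.re h
  simpa using this

lemma pure_sq {x : ℍ[K,a,b]} (hx : x.re = 0) :
    x * x = (a * x.imI^2 + b * x.imJ^2 - a*b*x.imK^2) • 1 := by
  ext <;>
    simp only [QuaternionAlgebra.re_mul, QuaternionAlgebra.imI_mul, QuaternionAlgebra.imJ_mul,
      QuaternionAlgebra.imK_mul, QuaternionAlgebra.re_smul, QuaternionAlgebra.imI_smul,
      QuaternionAlgebra.imJ_smul, QuaternionAlgebra.imK_smul, QuaternionAlgebra.re_one,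
      QuaternionAlgebra.imI_one, QuaternionAlgebra.imJ_one, QuaternionAlgebra.imK_one,
      hx, smul_eq_mul] <;> ring

lemma anticomm {x y : ℍ[K,a,b]} (hx : x.re = 0) (hy : y.re = 0)
    (h : a * x.imI * y.imI + b * x.imJ * y.imJ - a*b*x.imK*y.imK = 0) :
    y * x = -(x * y) := by
  ext <;>
    simp only [QuaternionAlgebra.re_mul, QuaternionAlgebra.imI_mul, QuaternionAlgebra.imJ_mul,
      QuaternionAlgebra.imK_mul, QuaternionAlgebra.re_neg, QuaternionAlgebra.imI_neg,
      QuaternionAlgebra.imJ_neg, QuaternionAlgebra.imK_neg, hx, hy] <;>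
    first
      | linear_combination 2*h
      | linear_combination h
      | linear_combination -h
      | ring

lemma pure_mul_re {x y : ℍ[K,a,b]} (hx : x.re = 0) (hy : y.re = 0)
    (h : a * x.imI * y.imI + b * x.imJ * y.imJ - a*b*x.imK*y.imK = 0) :
    (x * y).re = 0 := by
  simp only [QuaternionAlgebra.re_mul, hx, hy]
  linear_combination h

end Quat
section LemmaA
variable {a b : K}

lemma exists_pure_of_split (hK2 : (2:K) ≠ 0) (h : QuatIsSplit K a b) :
    ∃ x : ℍ[K,a,b], x.re = 0 ∧ x * x = 1 := by
  obtain ⟨φ⟩ := h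
  set M : Matrix (Fin 2) (Fin 2) K := !![1,0;0,-1] with hMdef
  have hM : M * M = 1 := by
    ext i j
    fin_cases i <;> fin_cases j <;>
      simp [hMdef, Matrix.mul_apply, Fin.sum_univ_two, Matrix.one_apply]
  set x : ℍ[K,a,b] := φ.symm M with hxdef
  have hx2 : x * x = 1 := by
    rw [hxdef, ← map_mul, hM, map_one]
  have hI : x.re * x.imI = 0 := by
    have := congrArg QuaternionAlgebra.imI hx2
    simp only [QuaternionAlgebra.imI_mul, QuaternionAlgebra.imI_one] at this
    have h2 : (2:K) * (x.re * x.imI) = 0 := by linear_combination this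
    exact (mul_eq_zero.mp h2).resolve_left hK2
  have hJ : x.re * x.imJ = 0 := by
    have := congrArg QuaternionAlgebra.imJ hx2
    simp only [QuaternionAlgebra.imJ_mul, QuaternionAlgebra.imJ_one] at this
    have h2 : (2:K) * (x.re * x.imJ) = 0 := by linear_combination this
    exact (mul_eq_zero.mp h2).resolve_left hK2
  have hKc : x.re * x.imK = 0 := by
    have := congrArg QuaternionAlgebra.imK hx2
    simp only [QuaternionAlgebra.imK_mul, QuaternionAlgebra.imK_one] at this
    have h2 : (2:K) * (x.re * x.imK) = 0 := by linear_combination this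
    exact (mul_eq_zero.mp h2).resolve_left hK2
  by_cases hre : x.re = 0
  · exact ⟨x, hre, hx2⟩
  · exfalso
    have hI0 : x.imI = 0 := by
      rcases mul_eq_zero.mp hI with h' | h' <;> [exact absurd h' hre; exact h']
    have hJ0 : x.imJ = 0 := by
      rcases mul_eq_zero.mp hJ with h' | h' <;> [exact absurd h' hre; exact h']
    have hK0 : x.imK = 0 := by
      rcases mul_eq_zero.mp hKc with h' | h' <;> [exact absurd h' hre; exact h']
    have hxc : x = algebraMap K ℍ[K,a,b] x.re := by
      ext <;> simp [hI0, hJ0, hK0, QuaternionAlgebra.re_coe, QuaternionAlgebra.imI_coe,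
        QuaternionAlgebra.imJ_coe, QuaternionAlgebra.imK_coe]
    have hMeq : M = algebraMap K (Matrix (Fin 2) (Fin 2) K) x.re := by
      have h1 : φ x = M := by rw [hxdef]; exact φ.apply_symm_apply M
      have h2 : φ (algebraMap K ℍ[K,a,b] x.re) = M := by rw [← hxc]; exact h1
      rw [← h2, AlgEquiv.commutes]
    have h00 : (1:K) = x.re := by
      have := congrFun (congrFun hMeq 0) 0
      simpa [hMdef, Matrix.algebraMap_matrix_apply] using this
    have h11 : (-1:K) = x.re := by
      have := congrFun (congrFun hMeq 1) 1
      simpa [hMdef, Matrix.algebraMap_matrix_apply] using this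
    apply hK2
    linear_combination h00 - h11

end LemmaA
section Construct
variable {a b : K}

/-- Orthogonal anisotropic complement of a pure unit vector. -/
lemma exists_orth (hK2 : (2:K) ≠ 0) (ha : a ≠ 0) (hb : b ≠ 0) {x : ℍ[K,a,b]}
    (hq : a * x.imI^2 + b * x.imJ^2 - a*b*x.imK^2 = 1) :
    ∃ y : ℍ[K,a,b], y.re = 0 ∧
      (a * x.imI * y.imI + b * x.imJ * y.imJ - a*b*x.imK*y.imK = 0) ∧
      (a * y.imI^2 + b * y.imJ^2 - a*b*y.imK^2 ≠ 0) := by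
  by_cases h1 : a * x.imI^2 + b * x.imJ^2 = 0
  · by_cases h2 : b * x.imK^2 - x.imI^2 = 0
    · by_cases h3 : a * x.imK^2 - x.imJ^2 = 0
      · exfalso
        apply hK2
        linear_combination (-2)*hq + h1 - a*h2 - b*h3
      · refine ⟨⟨0, 0, a * x.imK, x.imJ⟩, rfl, by show a*x.imI*0 + b*x.imJ*(a*x.imK) - a*b*x.imK*x.imJ = 0; ring, ?_⟩
        show a * 0^2 + b * (a*x.imK)^2 - a*b*(x.imJ)^2 ≠ 0
        intro hc
        apply h3
        have hz : a * b * (a * x.imK^2 - x.imJ^2) = 0 := by linear_combination hc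
        exact (mul_eq_zero.mp hz).resolve_left (mul_ne_zero ha hb)
    · refine ⟨⟨0, b * x.imK, 0, x.imI⟩, rfl, by show a*x.imI*(b*x.imK) + b*x.imJ*0 - a*b*x.imK*x.imI = 0; ring, ?_⟩
      show a * (b*x.imK)^2 + b * 0^2 - a*b*(x.imI)^2 ≠ 0
      intro hc
      apply h2
      have hz : a * b * (b * x.imK^2 - x.imI^2) = 0 := by linear_combination hc
      exact (mul_eq_zero.mp hz).resolve_left (mul_ne_zero ha hb)
  · refine ⟨⟨0, b * x.imJ, -(a * x.imI), 0⟩, rfl, by show a*x.imI*(b*x.imJ) + b*x.imJ*(-(a*x.imI)) - a*b*x.imK*0 = 0; ring, ?_⟩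
    show a * (b*x.imJ)^2 + b * (-(a*x.imI))^2 - a*b*(0:K)^2 ≠ 0
    intro hc
    apply h1
    have hz : a * b * (a * x.imI^2 + b * x.imJ^2) = 0 := by linear_combination hc
    exact (mul_eq_zero.mp hz).resolve_left (mul_ne_zero ha hb)

/-- Linear independence of `1, x, y, x*y`. -/
lemma coeff_zero (hK2 : (2:K) ≠ 0) {m : K} (hm : m ≠ 0) {x y : ℍ[K,a,b]}
    (hx2 : x * x = 1) (hy2 : y * y = m • 1) (hyx : y * x = -(x * y))
    (hxre : x.re = 0) (hyre : y.re = 0) (hxyre : (x*y).re = 0)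
    {α β γ δ : K}
    (h : α • (1:ℍ[K,a,b]) + β • x + γ • y + δ • (x*y) = 0) :
    α = 0 ∧ β = 0 ∧ γ = 0 ∧ δ = 0 := by
  have hXXY : x * (x*y) = y := by rw [← mul_assoc, hx2, one_mul]
  have hXYX : (x*y) * x = -y := by rw [mul_assoc, hyx, mul_neg, hXXY]
  have hYXY : y * (x*y) = -(m • x) := by
    rw [← mul_assoc, hyx, neg_mul, mul_assoc, hy2, mul_smul_comm, mul_one]
  have hXYY : (x*y) * y = m • x := by rw [mul_assoc, hy2, mul_smul_comm, mul_one]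
  have hXYXY : (x*y) * (x*y) = -(m • (1:ℍ[K,a,b])) := by
    rw [mul_assoc, hYXY, mul_neg, mul_smul_comm, hx2]
  have hα : α = 0 := by
    have := congrArg QuaternionAlgebra.re h
    simpa [hxre, hyre, hxyre] using this
  rw [hα, zero_smul, zero_add] at h
  have e1 : x * (β • x + γ • y + δ • (x*y)) + (β • x + γ • y + δ • (x*y)) * x
      = ((2:K)*β) • (1:ℍ[K,a,b]) := by
    simp only [mul_add, add_mul, mul_smul_comm, smul_mul_assoc, hx2, hXXY, hXYX, hyx, smul_neg]
    module
  rw [h, mul_zero, zero_mul, add_zero] at e1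
  have hβ : β = 0 := by
    rcases mul_eq_zero.mp (smul_one_eq_zero e1.symm) with h' | h'
    · exact absurd h' hK2
    · exact h'
  rw [hβ, zero_smul, zero_add] at h
  have e2 : y * (γ • y + δ • (x*y)) + (γ • y + δ • (x*y)) * y
      = ((2:K)*(γ*m)) • (1:ℍ[K,a,b]) := by
    simp only [mul_add, add_mul, mul_smul_comm, smul_mul_assoc, hy2, hYXY, hXYY, smul_neg,
      smul_smul]
    module
  rw [h, mul_zero, zero_mul, add_zero] at e2
  have hγ : γ = 0 := by
    rcases mul_eq_zero.mp (smul_one_eq_zero e2.symm) with h' | h'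
    · exact absurd h' hK2
    · exact (mul_eq_zero.mp h').resolve_right hm
  rw [hγ, zero_smul, zero_add] at h
  have e3 : (x*y) * (δ • (x*y)) = -((δ*m) • (1:ℍ[K,a,b])) := by
    rw [mul_smul_comm, hXYXY, smul_neg, smul_smul]
  rw [h, mul_zero] at e3
  have hδ : δ = 0 := by
    rcases mul_eq_zero.mp (smul_one_eq_zero (neg_eq_zero.mp e3.symm)) with h' | h'
    · exact h'
    · exact absurd h' hm
  exact ⟨hα, hβ, hγ, hδ⟩

lemma split_of_pure (hK2 : (2:K) ≠ 0) (ha : a ≠ 0) (hb : b ≠ 0)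
    {x : ℍ[K,a,b]} (hxre : x.re = 0) (hx2 : x * x = 1) : QuatIsSplit K a b := by
  have hq : a * x.imI^2 + b * x.imJ^2 - a*b*x.imK^2 = 1 := by
    have h1 := pure_sq hxre
    rw [hx2] at h1
    have := congrArg QuaternionAlgebra.re h1
    simpa using this.symm
  obtain ⟨y, hyre, hB, hm⟩ := exists_orth hK2 ha hb hq
  set m : K := a * y.imI^2 + b * y.imJ^2 - a*b*y.imK^2 with hmdef
  have hy2 : y * y = m • 1 := pure_sq hyre
  have hyx : y * x = -(x * y) := anticomm hxre hyre hB
  have hxyre : (x*y).re = 0 := pure_mul_re hxre hyre hB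
  have hxx : x * x = (1:K) • 1 := by rw [hx2, one_smul]
  -- the quaternionic basis of ℍ[K,a,b]
  let bq : QuaternionAlgebra.Basis ℍ[K,a,b] 1 0 m :=
    ⟨x, y, x*y, by rw [hxx, zero_smul, add_zero], hy2, rfl, by rw [hyx, zero_smul, zero_sub]⟩
  let ψ : ℍ[K,1,m] →ₐ[K] ℍ[K,a,b] := bq.liftHom
  have hψ : ∀ z : ℍ[K,1,m],
      ψ z = z.re • (1:ℍ[K,a,b]) + z.imI • x + z.imJ • y + z.imK • (x*y) := by
    intro z
    show bq.lift z = _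
    rw [QuaternionAlgebra.Basis.lift, Algebra.algebraMap_eq_smul_one]
  have hψinj : Function.Injective ψ := by
    rw [injective_iff_map_eq_zero]
    intro z hz
    rw [hψ] at hz
    obtain ⟨h1, h2, h3, h4⟩ := coeff_zero hK2 hm hx2 hy2 hyx hxre hyre hxyre hz
    ext <;> assumption
  have hψsurj : Function.Surjective ψ := by
    have hfr : Module.finrank K ℍ[K,1,m] = Module.finrank K ℍ[K,a,b] := by
      rw [QuaternionAlgebra.finrank_eq_four, QuaternionAlgebra.finrank_eq_four]
    exact (LinearMap.injective_iff_surjective_of_finrank_eq_finrank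
      (f := ψ.toLinearMap) hfr).mp hψinj
  -- the quaternionic basis of the matrix algebra
  have hI2 : (!![1,0;0,-1] : Matrix (Fin 2) (Fin 2) K) * !![1,0;0,-1] = (1:K) • 1 := by
    ext i j
    fin_cases i <;> fin_cases j <;>
      simp [Matrix.mul_apply, Fin.sum_univ_two, Matrix.one_apply]
  have hJ2 : (!![0,m;1,0] : Matrix (Fin 2) (Fin 2) K) * !![0,m;1,0] = m • 1 := by
    ext i j
    fin_cases i <;> fin_cases j <;>
      simp [Matrix.mul_apply, Fin.sum_univ_two, Matrix.one_apply]
  have hJI2 : (!![0,m;1,0] : Matrix (Fin 2) (Fin 2) K) * !![1,0;0,-1]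
      = -(!![1,0;0,-1] * !![0,m;1,0]) := by
    ext i j
    fin_cases i <;> fin_cases j <;>
      simp [Matrix.mul_apply, Fin.sum_univ_two]
  let bM : QuaternionAlgebra.Basis (Matrix (Fin 2) (Fin 2) K) 1 0 m :=
    ⟨!![1,0;0,-1], !![0,m;1,0], !![1,0;0,-1] * !![0,m;1,0], by rw [hI2, zero_smul, add_zero],
      hJ2, rfl, by rw [hJI2, zero_smul, zero_sub]⟩
  let χ : ℍ[K,1,m] →ₐ[K] Matrix (Fin 2) (Fin 2) K := bM.liftHom
  have hχ : ∀ z : ℍ[K,1,m],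
      χ z = !![z.re + z.imI, m*z.imJ + m*z.imK; z.imJ - z.imK, z.re - z.imI] := by
    intro z
    show bM.lift z = _
    rw [QuaternionAlgebra.Basis.lift, Algebra.algebraMap_eq_smul_one]
    show z.re • (1 : Matrix (Fin 2) (Fin 2) K) + z.imI • !![1,0;0,-1]
      + z.imJ • !![0,m;1,0] + z.imK • (!![1,0;0,-1] * !![0,m;1,0]) = _
    ext i j
    fin_cases i <;> fin_cases j <;>
      simp [Matrix.mul_apply, Fin.sum_univ_two, Matrix.one_apply] <;> ring
  have hχinj : Function.Injective χ := by
    rw [injective_iff_map_eq_zero]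
    intro z hz
    rw [hχ z] at hz
    have h00 : z.re + z.imI = 0 := by
      have := congrFun (congrFun hz 0) 0; simpa using this
    have h11 : z.re - z.imI = 0 := by
      have := congrFun (congrFun hz 1) 1; simpa using this
    have h01 : m*z.imJ + m*z.imK = 0 := by
      have := congrFun (congrFun hz 0) 1; simpa using this
    have h10 : z.imJ - z.imK = 0 := by
      have := congrFun (congrFun hz 1) 0; simpa using this
    have hre : (2:K) * z.re = 0 := by linear_combination h00 + h11
    have himI : (2:K) * z.imI = 0 := by linear_combination h00 - h11
    have himJ : m * ((2:K) * z.imJ) = 0 := by linear_combination h01 + m*h10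
    have himK : m * ((2:K) * z.imK) = 0 := by linear_combination h01 - m*h10
    ext
    · exact (mul_eq_zero.mp hre).resolve_left hK2
    · exact (mul_eq_zero.mp himI).resolve_left hK2
    · exact (mul_eq_zero.mp ((mul_eq_zero.mp himJ).resolve_left hm)).resolve_left hK2
    · exact (mul_eq_zero.mp ((mul_eq_zero.mp himK).resolve_left hm)).resolve_left hK2
  have hχsurj : Function.Surjective χ := by
    have hfr : Module.finrank K ℍ[K,1,m] = Module.finrank K (Matrix (Fin 2) (Fin 2) K) := by
      rw [QuaternionAlgebra.finrank_eq_four, Module.finrank_matrix]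
      simp
    exact (LinearMap.injective_iff_surjective_of_finrank_eq_finrank
      (f := χ.toLinearMap) hfr).mp hχinj
  exact ⟨((AlgEquiv.ofBijective ψ ⟨hψinj, hψsurj⟩).symm.trans
    (AlgEquiv.ofBijective χ ⟨hχinj, hχsurj⟩))⟩

end Construct
section Main

@[simp] lemma quatStarLin_apply (a b : K) (x : ℍ[K,a,b]) : quatStarLin K a b x = star x := rfl

lemma tensorCan_tmul (a b c d : K) (p : ℍ[K,a,b]) (q : ℍ[K,c,d]) :
    tensorCanInvolution K a b c d (p ⊗ₜ[K] q) = star p ⊗ₜ[K] star q := by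
  simp [tensorCanInvolution]

/-- Sign of the canonical involution on the `1, i, j, k` basis. -/
def qsign (K : Type) [Field K] : Fin 4 → K := ![1, -1, -1, -1]

lemma star_basis (a b : K) (p : Fin 4) :
    star (QuaternionAlgebra.basisOneIJK (R := K) a 0 b p)
      = qsign K p • QuaternionAlgebra.basisOneIJK (R := K) a 0 b p := by
  fin_cases p <;> ext <;>
    simp [QuaternionAlgebra.basisOneIJK, Module.Basis.coe_ofEquivFun, qsign,
      QuaternionAlgebra.coe_linearEquivTuple_symm, Pi.single_apply,
      QuaternionAlgebra.star_mk]

lemma repr_tensorCan (a b c d : K) (e : ℍ[K,a,b] ⊗[K] ℍ[K,c,d]) (pq : Fin 4 × Fin 4) :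
    ((QuaternionAlgebra.basisOneIJK a 0 b).tensorProduct
        (QuaternionAlgebra.basisOneIJK c 0 d)).repr (tensorCanInvolution K a b c d e) pq
      = qsign K pq.1 * qsign K pq.2 *
        ((QuaternionAlgebra.basisOneIJK a 0 b).tensorProduct
          (QuaternionAlgebra.basisOneIJK c 0 d)).repr e pq := by
  set B := (QuaternionAlgebra.basisOneIJK (R := K) a 0 b).tensorProduct
    (QuaternionAlgebra.basisOneIJK (R := K) c 0 d) with hB
  have hb : ∀ rs : Fin 4 × Fin 4,
      tensorCanInvolution K a b c d (B rs) = (qsign K rs.1 * qsign K rs.2) • B rs := by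
    rintro ⟨r, s⟩
    rw [hB, Module.Basis.tensorProduct_apply, tensorCan_tmul, star_basis, star_basis,
      TensorProduct.tmul_smul, ← TensorProduct.smul_tmul', smul_smul, mul_comm]
  have he : tensorCanInvolution K a b c d e
      = ∑ rs : Fin 4 × Fin 4, (qsign K rs.1 * qsign K rs.2 * B.repr e rs) • B rs := by
    conv_lhs => rw [← B.sum_repr e]
    rw [map_sum]
    refine Finset.sum_congr rfl fun rs _ => ?_
    rw [map_smul, hb rs, smul_smul, mul_comm]
  rw [he]
  have := Module.Basis.repr_sum_self B (fun rs => qsign K rs.1 * qsign K rs.2 * B.repr e rs)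
  exact congrFun this pq

end Main
section Forward
variable {a b c d : K}

lemma vec4_0 {α : Type*} (x0 x1 x2 x3 : α) : (![x0,x1,x2,x3]) (0 : Fin 4) = x0 := rfl
lemma vec4_1 {α : Type*} (x0 x1 x2 x3 : α) : (![x0,x1,x2,x3]) (1 : Fin 4) = x1 := rfl
lemma vec4_2 {α : Type*} (x0 x1 x2 x3 : α) : (![x0,x1,x2,x3]) (2 : Fin 4) = x2 := rfl
lemma vec4_3 {α : Type*} (x0 x1 x2 x3 : α) : (![x0,x1,x2,x3]) (3 : Fin 4) = x3 := rfl

lemma gvec_zero (p : Fin 4) (hp : p ≠ 0) : (![1,0,0,0] : Fin 4 → K) p = 0 := by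
  fin_cases p
  · exact absurd rfl hp
  all_goals rfl

lemma qsign_zero : qsign K 0 = 1 := rfl

lemma qsign_ne (p : Fin 4) (hp : p ≠ 0) : qsign K p = -1 := by
  fin_cases p
  · exact absurd rfl hp
  all_goals rfl

lemma forward (hK2 : (2:K) ≠ 0) (ha : a ≠ 0) (hb : b ≠ 0) (hc : c ≠ 0) (hd : d ≠ 0)
    (e : ℍ[K,a,b] ⊗[K] ℍ[K,c,d]) (he2 : e * e = e)
    (heσ : tensorCanInvolution K a b c d e = 1 - e) :
    QuatIsSplit K a b ∨ QuatIsSplit K c d := by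
  classical
  set B := (QuaternionAlgebra.basisOneIJK (R := K) a 0 b).tensorProduct
      (QuaternionAlgebra.basisOneIJK (R := K) c 0 d) with hBdef
  set f : Fin 4 × Fin 4 → K := fun pq => B.repr e pq with hfdef
  have hfapp : ∀ pq, B.repr e pq = f pq := fun _ => rfl
  have h1r : ∀ p q : Fin 4, B.repr (1 : ℍ[K,a,b] ⊗[K] ℍ[K,c,d]) (p,q)
      = (![1,0,0,0] : Fin 4 → K) q * (![1,0,0,0] : Fin 4 → K) p := by
    intro p q
    rw [hBdef, Algebra.TensorProduct.one_def, Module.Basis.tensorProduct_repr_tmul_apply]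
    simp [QuaternionAlgebra.coe_basisOneIJK_repr]
  have hσr : ∀ pq : Fin 4 × Fin 4, qsign K pq.1 * qsign K pq.2 * f pq
      = B.repr (1 : ℍ[K,a,b] ⊗[K] ℍ[K,c,d]) pq - f pq := by
    intro pq
    have h1 := congrArg (fun z => B.repr z pq) heσ
    simp only [map_sub, Finsupp.sub_apply] at h1
    rw [hBdef] at h1
    rw [repr_tensorCan] at h1
    rw [← hBdef] at h1
    exact h1
  have hf00 : (2:K) * f (0,0) = 1 := by
    have h := hσr (0,0)
    rw [h1r 0 0] at h
    simp only [qsign_zero, one_mul, vec4_0] at h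
    linear_combination h
  have hf0 : ∀ p q : Fin 4, p ≠ 0 → q ≠ 0 → f (p,q) = 0 := by
    intro p q hp hq
    have h := hσr (p,q)
    rw [h1r p q] at h
    simp only [qsign_ne p hp, qsign_ne q hq, gvec_zero p hp, gvec_zero q hq] at h
    have h2 : (2:K) * f (p,q) = 0 := by linear_combination h
    exact (mul_eq_zero.mp h2).resolve_left hK2
  set u : ℍ[K,a,b] := ⟨0, f (1,0), f (2,0), f (3,0)⟩ with hu
  set w : ℍ[K,c,d] := ⟨0, f (0,1), f (0,2), f (0,3)⟩ with hw
  have hure : u.re = 0 := by rw [hu]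
  have hwre : w.re = 0 := by rw [hw]
  have hue : e = (2:K)⁻¹ • 1 + u ⊗ₜ[K] 1 + (1:ℍ[K,a,b]) ⊗ₜ[K] w := by
    refine B.ext_elem fun pq => ?_
    obtain ⟨p, q⟩ := pq
    rw [map_add, map_add, map_smul]
    simp only [Finsupp.add_apply, Finsupp.smul_apply, smul_eq_mul]
    rw [hfapp, h1r p q]
    rw [hBdef, Module.Basis.tensorProduct_repr_tmul_apply, Module.Basis.tensorProduct_repr_tmul_apply]
    simp only [QuaternionAlgebra.coe_basisOneIJK_repr, hu, hw, smul_eq_mul]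
    fin_cases p <;> fin_cases q <;>
      simp <;>
      first
        | (exact hf0 _ _ (by decide) (by decide))
        | (field_simp; linear_combination hf00)
        | ring
  -- now exploit e * e = e
  set s : K := a * u.imI^2 + b * u.imJ^2 - a*b*u.imK^2 with hs
  set t : K := c * w.imI^2 + d * w.imJ^2 - c*d*w.imK^2 with ht
  have huu : u * u = s • 1 := pure_sq hure
  have hww : w * w = t • 1 := pure_sq hwre
  have hhalf : (2:K)⁻¹ * 2 = 1 := inv_mul_cancel₀ hK2
  rw [hue] at he2
  have hexp : ((2:K)⁻¹ • (1:ℍ[K,a,b] ⊗[K] ℍ[K,c,d]) + u ⊗ₜ[K] 1 + (1:ℍ[K,a,b]) ⊗ₜ[K] w)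
        * ((2:K)⁻¹ • 1 + u ⊗ₜ[K] 1 + (1:ℍ[K,a,b]) ⊗ₜ[K] w)
      = ((2:K)⁻¹*(2:K)⁻¹ + s + t) • 1 + ((2:K)⁻¹+(2:K)⁻¹) • (u ⊗ₜ[K] 1)
        + ((2:K)⁻¹+(2:K)⁻¹) • ((1:ℍ[K,a,b]) ⊗ₜ[K] w) + (u ⊗ₜ[K] w) + (u ⊗ₜ[K] w) := by
    simp only [mul_add, add_mul, smul_mul_assoc, mul_smul_comm, one_mul, mul_one,
      Algebra.TensorProduct.tmul_mul_tmul, huu, hww, smul_smul,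
      TensorProduct.tmul_smul, ← TensorProduct.smul_tmul', ← Algebra.TensorProduct.one_def]
    module
  rw [hexp] at he2
  have h2h : ((2:K)⁻¹ + (2:K)⁻¹) = 1 := by linear_combination hhalf
  rw [h2h, one_smul, one_smul] at he2
  have hmain : ((s + t + (2:K)⁻¹*(2:K)⁻¹) - (2:K)⁻¹) • (1:ℍ[K,a,b] ⊗[K] ℍ[K,c,d])
      + ((2:K) • (u ⊗ₜ[K] w)) = 0 := by
    linear_combination (norm := module) he2
  have hcoord : ∀ p q : Fin 4,
      ((s + t + (2:K)⁻¹*(2:K)⁻¹) - (2:K)⁻¹) * B.repr (1:ℍ[K,a,b] ⊗[K] ℍ[K,c,d]) (p,q)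
        + (2:K) * ((![w.re, w.imI, w.imJ, w.imK]) q * (![u.re, u.imI, u.imJ, u.imK]) p) = 0 := by
    intro p q
    have h := congrArg (fun z => B.repr z (p,q)) hmain
    simp only [map_add, map_smul, Finsupp.add_apply, Finsupp.smul_apply, map_zero,
      Finsupp.coe_zero, Pi.zero_apply, smul_eq_mul] at h
    rw [hBdef, Module.Basis.tensorProduct_repr_tmul_apply] at h
    simp only [QuaternionAlgebra.coe_basisOneIJK_repr, smul_eq_mul, ← hBdef] at h
    linear_combination h
  have hst : (s + t + (2:K)⁻¹*(2:K)⁻¹) - (2:K)⁻¹ = 0 := by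
    have h := hcoord 0 0
    rw [h1r 0 0] at h
    simp only [vec4_0, hure, hwre] at h
    linear_combination h
  have hprod : ∀ p q : Fin 4, p ≠ 0 → q ≠ 0 →
      (![w.re, w.imI, w.imJ, w.imK]) q * (![u.re, u.imI, u.imJ, u.imK]) p = 0 := by
    intro p q hp hq
    have h := hcoord p q
    rw [h1r p q, gvec_zero p hp] at h
    simp only [mul_zero, zero_add] at h
    have h2 := (mul_eq_zero.mp h).resolve_left hK2
    exact h2
  by_cases hu0 : u = 0
  · -- left factor trivial: Q₂ splits
    have hs0 : s = 0 := by rw [hs, hu0]; simp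
    refine Or.inr (split_of_pure hK2 hc hd (x := (2:K) • w) ?_ ?_)
    · simp [hwre]
    · have hx : ((2:K) • w) * ((2:K) • w) = ((2:K)*(2:K)*t) • 1 := by
        rw [smul_mul_assoc, mul_smul_comm, smul_smul, hww, smul_smul]
      rw [hx]
      have h41 : (2:K)*(2:K)*t = 1 := by
        linear_combination 4*hst - 4*hs0 - (2*(2:K)⁻¹ - 1)*hhalf
      rw [h41, one_smul]
  · -- u ≠ 0 : then w = 0 and Q₁ splits
    have hcomp : ∃ p : Fin 4, p ≠ 0 ∧ (![u.re, u.imI, u.imJ, u.imK]) p ≠ 0 := by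
      by_contra hcon
      push_neg at hcon
      apply hu0
      have h1 := hcon 1 (by decide)
      have h2 := hcon 2 (by decide)
      have h3 := hcon 3 (by decide)
      rw [vec4_1] at h1; rw [vec4_2] at h2; rw [vec4_3] at h3
      ext
      · simpa using hure
      · simpa using h1
      · simpa using h2
      · simpa using h3
    obtain ⟨p, hp, hup⟩ := hcomp
    have hw0 : w = 0 := by
      have h1 := hprod p 1 hp (by decide)
      have h2 := hprod p 2 hp (by decide)
      have h3 := hprod p 3 hp (by decide)
      rw [vec4_1] at h1; rw [vec4_2] at h2; rw [vec4_3] at h3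
      ext
      · simpa using hwre
      · simpa using (mul_eq_zero.mp h1).resolve_right hup
      · simpa using (mul_eq_zero.mp h2).resolve_right hup
      · simpa using (mul_eq_zero.mp h3).resolve_right hup
    have ht0 : t = 0 := by rw [ht, hw0]; simp
    refine Or.inl (split_of_pure hK2 ha hb (x := (2:K) • u) ?_ ?_)
    · simp [hure]
    · have hx : ((2:K) • u) * ((2:K) • u) = ((2:K)*(2:K)*s) • 1 := by
        rw [smul_mul_assoc, mul_smul_comm, smul_smul, huu, smul_smul]
      rw [hx]
      have h41 : (2:K)*(2:K)*s = 1 := by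
        linear_combination 4*hst - 4*ht0 - (2*(2:K)⁻¹ - 1)*hhalf
      rw [h41, one_smul]

end Forward

end QuatHyp

/-- `(Q₁, can) ⊗ (Q₂, can)` is hyperbolic iff `Q₁` or `Q₂` is split. -/
theorem tensor_canonical_involutions_hyperbolic_iff_split
    (hK : ringChar K ≠ 2) (a b c d : K)
    (ha : a ≠ 0) (hb : b ≠ 0) (hc : c ≠ 0) (hd : d ≠ 0) :
    (∃ e : ℍ[K,a,b] ⊗[K] ℍ[K,c,d],
        e * e = e ∧ tensorCanInvolution K a b c d e = 1 - e) ↔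
      (QuatIsSplit K a b ∨ QuatIsSplit K c d) := by
  have hK2 : (2:K) ≠ 0 := Ring.two_ne_zero hK
  constructor
  · rintro ⟨e, he2, heσ⟩
    exact QuatHyp.forward hK2 ha hb hc hd e he2 heσ
  · have hhalf : (2:K)⁻¹ * 2 = 1 := inv_mul_cancel₀ hK2
    rintro (h | h)
    · obtain ⟨x, hxre, hx2⟩ := QuatHyp.exists_pure_of_split hK2 h
      have hsx : star x = -x := by ext <;> simp [hxre]
      refine ⟨((2:K)⁻¹ • (1 + x)) ⊗ₜ[K] (1:ℍ[K,c,d]), ?_, ?_⟩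
      · rw [Algebra.TensorProduct.tmul_mul_tmul, mul_one]
        congr 1
        rw [smul_mul_assoc, mul_smul_comm, smul_smul]
        have hxx : (1 + x) * (1 + x) = (2:K) • (1 + x) := by
          simp only [add_mul, mul_add, one_mul, mul_one, hx2, two_smul]
          abel
        rw [hxx, smul_smul]
        congr 1
        linear_combination (2:K)⁻¹ * hhalf
      · rw [QuatHyp.tensorCan_tmul, star_one, QuaternionAlgebra.star_smul, star_add, star_one, hsx,
          Algebra.TensorProduct.one_def, ← TensorProduct.sub_tmul]
        congr 1
        match_scalars <;>
          first
            | linear_combination hhalf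
            | ring
    · obtain ⟨x, hxre, hx2⟩ := QuatHyp.exists_pure_of_split hK2 h
      have hsx : star x = -x := by ext <;> simp [hxre]
      refine ⟨(1:ℍ[K,a,b]) ⊗ₜ[K] ((2:K)⁻¹ • (1 + x)), ?_, ?_⟩
      · rw [Algebra.TensorProduct.tmul_mul_tmul, mul_one]
        congr 1
        rw [smul_mul_assoc, mul_smul_comm, smul_smul]
        have hxx : (1 + x) * (1 + x) = (2:K) • (1 + x) := by
          simp only [add_mul, mul_add, one_mul, mul_one, hx2, two_smul]
          abel
        rw [hxx, smul_smul]
        congr 1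
        linear_combination (2:K)⁻¹ * hhalf
      · rw [QuatHyp.tensorCan_tmul, star_one, QuaternionAlgebra.star_smul, star_add, star_one, hsx,
          Algebra.TensorProduct.one_def, ← TensorProduct.tmul_sub]
        congr 1
        match_scalars <;>
          first
            | linear_combination hhalf
            | ring
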